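/- Let u, v ∈ 𝓢(ℝ,ℂ) with ∫ conj(u(x)) v(x) dx = 1, and let α, β ∈ ℂ satisfy α + β + αβ = 0. For x₀ ∈ ℝ define the tempered distribution η_{x₀} : 𝓢(ℝ,ℂ) → ℂ by η_{x₀}(φ) = φ(x₀) + conj(α) u(x₀) ∫ conj(v(x)) φ(x) dx (i.e., η_{x₀} = T ξ_{x₀} for T = 1 + α P_{u,v}). Define q̂† φ = B(q̂₀(A φ)), where (A φ)(x) = φ(x) + conj(α) (∫ conj(v)φ) u(x), (B ψ)(x) = ψ(x) + conj(β) (∫ conj(v)ψ) u(x), and (q̂₀ ψ)(x) = x ψ(x). Then for every φ ∈ 𝓢(ℝ,ℂ): η_{x₀}(q̂† φ) = x₀ · η_{x₀}(φ). (This is the eigenvalue equation q̂ η_{x₀} = x₀ η_{x₀} for q̂ = T q̂₀ T⁻¹, tested against φ.) -/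

import Mathlib

open MeasureTheory

/-- First example: for `T = 1 + α P_{u,v}` with `⟨u,v⟩ = 1` and `α + β + αβ = 0`, the
tempered distribution `η_{x₀} = T ξ_{x₀}`, acting as
`η_{x₀}(φ) = φ(x₀) + conj(α) u(x₀) ⟨v, φ⟩`, satisfies the eigenvalue equation
`η_{x₀}(q̂† φ) = x₀ η_{x₀}(φ)` where `q̂† φ = (T⁻¹)†(q̂₀(T† φ)) = B (q̂₀ (A φ))`. -/
theorem statement8
    (u v : SchwartzMap ℝ ℂ)
    (huv : ∫ x : ℝ, (starRingEnd ℂ) (u x) * v x = 1)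
    (α β : ℂ) (hαβ : α + β + α * β = 0) (x₀ : ℝ)
    (A B : SchwartzMap ℝ ℂ → SchwartzMap ℝ ℂ)
    (hA : ∀ (φ : SchwartzMap ℝ ℂ) (x : ℝ),
      A φ x = φ x + (starRingEnd ℂ) α * (∫ t : ℝ, (starRingEnd ℂ) (v t) * φ t) * u x)
    (hB : ∀ (ψ : SchwartzMap ℝ ℂ) (x : ℝ),
      B ψ x = ψ x + (starRingEnd ℂ) β * (∫ t : ℝ, (starRingEnd ℂ) (v t) * ψ t) * u x)
    (Q : SchwartzMap ℝ ℂ → SchwartzMap ℝ ℂ)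
    (hQ : ∀ (ψ : SchwartzMap ℝ ℂ) (x : ℝ), Q ψ x = (x : ℂ) * ψ x) :
    ∀ φ : SchwartzMap ℝ ℂ,
      B (Q (A φ)) x₀
          + (starRingEnd ℂ) α * u x₀ * ∫ x : ℝ, (starRingEnd ℂ) (v x) * B (Q (A φ)) x
        = (x₀ : ℂ) *
          (φ x₀ + (starRingEnd ℂ) α * u x₀ * ∫ x : ℝ, (starRingEnd ℂ) (v x) * φ x) := by
  intro φ
  -- integrability of `conj v * f` for any Schwartz `f`
  have hint : ∀ f : SchwartzMap ℝ ℂ,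
      Integrable (fun t : ℝ => (starRingEnd ℂ) (v t) * f t) := by
    intro f
    obtain ⟨C, _, hC⟩ := v.decay 0 0
    refine (f.integrable (μ := volume)).bdd_mul
      ((Complex.continuous_conj.comp v.continuous).aestronglyMeasurable) (c := C) (Filter.Eventually.of_forall fun x => ?_)
    simpa using hC x
  -- linearity of the pairing
  have hlin : ∀ (f g : SchwartzMap ℝ ℂ) (a : ℂ),
      (∫ t : ℝ, (starRingEnd ℂ) (v t) * (f t + a * g t))
        = (∫ t : ℝ, (starRingEnd ℂ) (v t) * f t)
          + a * ∫ t : ℝ, (starRingEnd ℂ) (v t) * g t := by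
    intro f g a
    have : (fun t : ℝ => (starRingEnd ℂ) (v t) * (f t + a * g t))
        = fun t : ℝ => (starRingEnd ℂ) (v t) * f t
            + a * ((starRingEnd ℂ) (v t) * g t) := funext fun t => by ring
    rw [this, integral_add (hint f) ((hint g).const_mul a), integral_const_mul]
  -- ⟨v, u⟩ = 1
  have hIu : (∫ t : ℝ, (starRingEnd ℂ) (v t) * u t) = 1 := by
    have : (fun t : ℝ => (starRingEnd ℂ) (v t) * u t)
        = fun t : ℝ => (starRingEnd ℂ) ((starRingEnd ℂ) (u t) * v t) := by
      funext t; simp [mul_comm]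
    rw [this, integral_conj, huv, map_one]
  set cα := (starRingEnd ℂ) α
  set cβ := (starRingEnd ℂ) β
  set Iφ := ∫ t : ℝ, (starRingEnd ℂ) (v t) * φ t with hIφ
  -- pointwise formula for Q (A φ)
  have hQA : ∀ t : ℝ, Q (A φ) t = Q φ t + (cα * Iφ) * Q u t := by
    intro t
    rw [hQ, hA, hQ, hQ]
    ring
  set Jφ := ∫ t : ℝ, (starRingEnd ℂ) (v t) * Q φ t
  set Ju := ∫ t : ℝ, (starRingEnd ℂ) (v t) * Q u t
  have hIQA : (∫ t : ℝ, (starRingEnd ℂ) (v t) * Q (A φ) t) = Jφ + (cα * Iφ) * Ju := by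
    calc (∫ t : ℝ, (starRingEnd ℂ) (v t) * Q (A φ) t)
        = ∫ t : ℝ, (starRingEnd ℂ) (v t) * (Q φ t + (cα * Iφ) * Q u t) := by
          simp_rw [hQA]
      _ = Jφ + (cα * Iφ) * Ju := hlin _ _ _
  set S := Jφ + (cα * Iφ) * Ju with hS
  -- pointwise formula for B (Q (A φ))
  have hBpt : ∀ t : ℝ, B (Q (A φ)) t = Q (A φ) t + (cβ * S) * u t := by
    intro t
    rw [hB, hIQA]
  have hIB : (∫ t : ℝ, (starRingEnd ℂ) (v t) * B (Q (A φ)) t) = S + (cβ * S) * 1 := by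
    calc (∫ t : ℝ, (starRingEnd ℂ) (v t) * B (Q (A φ)) t)
        = ∫ t : ℝ, (starRingEnd ℂ) (v t) * (Q (A φ) t + (cβ * S) * u t) := by
          simp_rw [hBpt]
      _ = (∫ t : ℝ, (starRingEnd ℂ) (v t) * Q (A φ) t)
            + (cβ * S) * ∫ t : ℝ, (starRingEnd ℂ) (v t) * u t := hlin _ _ _
      _ = S + (cβ * S) * 1 := by rw [hIQA, hIu]
  have hconj : cα + cβ + cα * cβ = 0 := by
    have := congrArg (starRingEnd ℂ) hαβ
    simpa [map_add, map_mul] using this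
  rw [hIB, hBpt x₀, hQA x₀, hQ, hQ]
  linear_combination (S * u x₀) * hconj
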